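/- Let a=(a_1,...,a_n) be a weakly increasing real sequence and let e=(e_1,...,e_n) be an arbitrary real sequence. Then e is a restricted growth sequence relative to a in the cap sense if and only if e is a restricted growth sequence relative to a in the general algorithmic sense. -/
import Mathlib


open Polynomial Finset

/-- The cap-index function for the restricted-growth condition (0-indexed version of
`f` with `f(1) = 1`): `capF a e i` is `f(i+1) - 1`, so the cap for `e i` is
`a (capF a e i)`.  The index increments exactly when `e_i` equals its cap. -/
noncomputable def capF (a e : ℕ → ℝ) : ℕ → ℕ
  | 0 => 0
  | i + 1 => if e i = a (capF a e i) then capF a e i + 1 else capF a e i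

/-- `e` is a restricted growth sequence relative to (weakly increasing) `a`
(cap sense): each `e_i` is at most its cap `a_{f(i)}`. -/
def IsRGCap (n : ℕ) (a e : ℕ → ℝ) : Prop :=
  ∀ i, i < n → e i ≤ a (capF a e i)

/-- One step of the algorithmic restricted-growth test: given `a_i` and the current
list `X`, find the first element of `X` that is `≥ a_i`; if none exists delete the
last element of `X`; if it equals `a_i` delete that occurrence; if it exceeds `a_i`,
fail (return `none`). -/
noncomputable def rgsStep (ai : ℝ) (Xl : List ℝ) : Option (List ℝ) :=
  match Xl.findIdx? (fun x => decide (ai ≤ x)) with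
  | none => some Xl.dropLast
  | some j => if Xl.getD j 0 = ai then some (Xl.eraseIdx j) else none

/-- Run the first `i` steps of the algorithm (with caps `a 0, a 1, …`), starting
from the list `Xl`. -/
noncomputable def rgsRun (a : ℕ → ℝ) (Xl : List ℝ) : ℕ → Option (List ℝ)
  | 0 => some Xl
  | i + 1 => (rgsRun a Xl i).bind (rgsStep (a i))

/-- `e` is a restricted growth sequence relative to `a` (general algorithmic sense):
the algorithm, started on the list `(e_1, …, e_n)`, completes all `n` steps without
failure. -/
def IsRGGen (n : ℕ) (a e : ℕ → ℝ) : Prop :=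
  (rgsRun a (List.ofFn fun i : Fin n => e i) n).isSome


namespace RGSAux

variable (a e : ℕ → ℝ)

lemma capF_mono : Monotone (capF a e) := by
  apply monotone_nat_of_le_succ
  intro i
  simp only [capF]
  split <;> omega

lemma capF_le : ∀ i, capF a e i ≤ i := by
  intro i; induction i with
  | zero => simp [capF]
  | succ k ih => simp only [capF]; split <;> omega

lemma capF_lt_of_hit {j k : ℕ} (hjk : j < k) (hj : e j = a (capF a e j)) :
    capF a e j < capF a e k := by
  have h1 : capF a e (j+1) = capF a e j + 1 := by simp [capF, hj]
  have h2 := capF_mono a e (show j+1 ≤ k from hjk)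
  omega

lemma exists_hit : ∀ k t, t < capF a e k → ∃ j < k, e j = a (capF a e j) ∧ capF a e j = t := by
  intro k
  induction k with
  | zero => intro t ht; simp [capF] at ht
  | succ k ih =>
    intro t ht
    by_cases hk : e k = a (capF a e k)
    · rw [show capF a e (k+1) = capF a e k + 1 by simp [capF, hk]] at ht
      rcases Nat.lt_or_ge t (capF a e k) with h | h
      · obtain ⟨j, hj, h1, h2⟩ := ih t h; exact ⟨j, by omega, h1, h2⟩
      · exact ⟨k, by omega, hk, by omega⟩
    · rw [show capF a e (k+1) = capF a e k by simp [capF, hk]] at ht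
      obtain ⟨j, hj, h1, h2⟩ := ih t ht; exact ⟨j, by omega, h1, h2⟩

lemma hit_unique {j k : ℕ} (hj : e j = a (capF a e j)) (hk : e k = a (capF a e k))
    (h : capF a e j = capF a e k) : j = k := by
  rcases lt_trichotomy j k with h1 | h1 | h1
  · exact absurd (capF_lt_of_hit a e h1 hj) (by omega)
  · exact h1
  · exact absurd (capF_lt_of_hit a e h1 hk) (by omega)

noncomputable def rgp (m j : ℕ) : Bool :=
  @decide (¬ (e j = a (capF a e j) ∧ capF a e j < m)) (Classical.propDecidable _)

lemma rgp_iff (m j : ℕ) : rgp a e m j = true ↔ ¬ (e j = a (capF a e j) ∧ capF a e j < m) := by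
  unfold rgp
  exact @decide_eq_true_iff _ (Classical.propDecidable _)

lemma range_split (n j : ℕ) (hj : j < n) :
    List.range n = List.range j ++ j :: (List.range (n - (j+1))).map (fun x => j+1+x) := by
  conv_lhs => rw [show n = j + (1 + (n - (j+1))) by omega]
  rw [List.range_add, List.range_add, List.map_append, List.map_map]
  simp only [List.range_succ, List.range_zero, List.nil_append, List.map_cons, List.map_nil, Nat.add_zero, List.append_assoc,
    List.singleton_append]
  congr 2
  apply List.map_congr_left
  intro x _
  simp only [Function.comp_apply]
  omega

lemma ofFn_eq_map (n : ℕ) : (List.ofFn fun i : Fin n => e i) = (List.range n).map e := by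
  apply List.ext_getElem <;> simp



lemma findIdx?_split (p : ℝ → Bool) (A B : List ℝ) (x : ℝ)
    (hA : ∀ y ∈ A, p y = false) (hx : p x = true) :
    (A ++ x :: B).findIdx? p = some A.length := by
  rw [List.findIdx?_append, List.findIdx?_eq_none_iff.2 hA]
  rw [List.findIdx?_cons, if_pos hx]
  simp

lemma rgsStep_split (t : ℝ) (A B : List ℝ) (x : ℝ)
    (hA : ∀ y ∈ A, y < t) (hx : t ≤ x) :
    rgsStep t (A ++ x :: B) = if x = t then some (A ++ B) else none := by
  have hf : (A ++ x :: B).findIdx? (fun y => decide (t ≤ y)) = some A.length := by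
    apply findIdx?_split
    · intro y hy; simpa using not_le.2 (hA y hy)
    · simpa using hx
  have hg : (A ++ x :: B).getD A.length 0 = x := by
    rw [List.getD_append_right _ _ _ _ le_rfl]; simp
  have he : (A ++ x :: B).eraseIdx A.length = A ++ B := by
    rw [List.eraseIdx_append_of_length_le le_rfl]; simp
  unfold rgsStep
  rw [hf]
  show (if (A ++ x :: B).getD A.length 0 = t then some ((A ++ x :: B).eraseIdx A.length)
    else none) = _
  rw [hg, he]

lemma rgsStep_none (t : ℝ) (X : List ℝ) (h : ∀ y ∈ X, y < t) :
    rgsStep t X = some X.dropLast := by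
  have hf : X.findIdx? (fun y => decide (t ≤ y)) = none :=
    List.findIdx?_eq_none_iff.2 fun y hy => by simpa using not_le.2 (h y hy)
  unfold rgsStep
  rw [hf]

lemma rgsRun_none (a : ℕ → ℝ) (X : List ℝ) (j : ℕ) (h : rgsRun a X j = none) :
    ∀ k, j ≤ k → rgsRun a X k = none := by
  intro k hk
  induction k, hk using Nat.le_induction with
  | base => exact h
  | succ k hk ih =>
    show (rgsRun a X k).bind (rgsStep (a k)) = none
    rw [ih]
    rfl

lemma run_eq (n : ℕ) (ha : ∀ i j, i ≤ j → j < n → a i ≤ a j) :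
    ∀ m, m ≤ n →
    (∀ t < m, ∃ j < n, e j = a (capF a e j) ∧ capF a e j = t) →
    (∀ k < n, ¬ e k = a (capF a e k) → capF a e k < m → e k < a (capF a e k)) →
    rgsRun a (List.ofFn fun i : Fin n => e i) m
      = some (((List.range n).filter (rgp a e m)).map e) := by
  intro m
  induction m with
  | zero =>
    intro _ _ _
    have h1 : (List.range n).filter (rgp a e 0) = List.range n :=
      List.filter_eq_self.2 (fun j _ => (rgp_iff a e 0 j).2 (by omega))
    rw [h1]
    show some _ = some _
    rw [ofFn_eq_map]
  | succ m ih =>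
    intro hm hhits hcap
    have ihh := ih (by omega) (fun t ht => hhits t (by omega))
      (fun k hk h1 h2 => hcap k hk h1 (by omega))
    obtain ⟨j, hjn, hhitj, hcj⟩ := hhits m (by omega)
    have hmn : m < n := by omega
    have hpj : rgp a e m j = true := (rgp_iff a e m j).2 (fun h => by omega)
    have hrs := range_split n j hjn
    set A := (List.range j).filter (rgp a e m) with hAdef
    set B := ((List.range (n - (j+1))).map (fun x => j+1+x)).filter (rgp a e m) with hBdef
    have hIm : (List.range n).filter (rgp a e m) = A ++ j :: B := by
      rw [hrs, List.filter_append, List.filter_cons_of_pos hpj]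
    have hAe : ∀ y ∈ A.map e, y < a m := by
      intro y hy
      obtain ⟨k, hkA, rfl⟩ := List.mem_map.1 hy
      have hkj := List.mem_range.1 (List.mem_of_mem_filter hkA)
      have hk2 := (rgp_iff a e m k).1 (List.of_mem_filter hkA)
      have hnh : ¬ e k = a (capF a e k) := by
        intro hh
        exact hk2 ⟨hh, hcj ▸ capF_lt_of_hit a e hkj hh⟩
      have hle : capF a e k ≤ m := hcj ▸ capF_mono a e (le_of_lt hkj)
      have h1 : e k < a (capF a e k) := hcap k (by omega) hnh (by omega)
      exact lt_of_lt_of_le h1 (ha _ _ hle hmn)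
    have hej : e j = a m := by rw [hhitj, hcj]
    have hstep : rgsStep (a m) ((A ++ j :: B).map e) = some ((A ++ B).map e) := by
      rw [List.map_append, List.map_cons,
        rgsStep_split (a m) _ _ _ hAe (le_of_eq hej.symm), if_pos hej, ← List.map_append]
    have hpeq : ∀ k, k ≠ j → rgp a e (m+1) k = rgp a e m k := by
      intro k hkj
      have huniq : ¬ (e k = a (capF a e k) ∧ capF a e k = m) := fun h =>
        hkj (hit_unique a e h.1 hhitj (h.2.trans hcj.symm))
      unfold rgp
      rw [decide_eq_decide]
      constructor
      · intro h hh; exact h ⟨hh.1, by omega⟩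
      · intro h hh
        rcases Nat.lt_or_ge (capF a e k) m with h2 | h2
        · exact h ⟨hh.1, h2⟩
        · exact huniq ⟨hh.1, by omega⟩
    have hpj1 : ¬ rgp a e (m+1) j = true := fun h =>
      (rgp_iff a e (m+1) j).1 h ⟨hhitj, by omega⟩
    have hIm1 : (List.range n).filter (rgp a e (m+1)) = A ++ B := by
      rw [hrs, List.filter_append, List.filter_cons_of_neg hpj1]
      congr 1
      · rw [hAdef]
        apply List.filter_congr
        intro k hk
        exact hpeq k (by have := List.mem_range.1 hk; omega)
      · rw [hBdef]
        apply List.filter_congr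
        intro k hk
        obtain ⟨x, _, rfl⟩ := List.mem_map.1 hk
        exact hpeq _ (by omega)
    show (rgsRun a (List.ofFn fun i : Fin n => e i) m).bind (rgsStep (a m)) = _
    rw [ihh, hIm, Option.bind_some, hstep, hIm1]

end RGSAux

theorem statement3 (n : ℕ) (a e : ℕ → ℝ)
    (ha : ∀ i j, i ≤ j → j < n → a i ≤ a j) :
    IsRGCap n a e ↔ IsRGGen n a e := by
  classical
  constructor
  · intro hcap
    have hHn := RGSAux.capF_le a e n
    have hrun := RGSAux.run_eq a e n ha (capF a e n) hHn
      (fun t ht => RGSAux.exists_hit a e n t ht)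
      (fun k hk hne _ => lt_of_le_of_ne (hcap k hk) hne)
    have key : ∀ d, capF a e n + d ≤ n →
        ∃ Y, rgsRun a (List.ofFn fun i : Fin n => e i) (capF a e n + d) = some Y ∧
          ∀ x ∈ Y, ∃ j, j < n ∧ ¬ e j = a (capF a e j) ∧ x = e j := by
      intro d
      induction d with
      | zero =>
        intro _
        refine ⟨_, hrun, ?_⟩
        intro x hx
        obtain ⟨j, hj, rfl⟩ := List.mem_map.1 hx
        have hjn := List.mem_range.1 (List.mem_of_mem_filter hj)
        have hj2 := (RGSAux.rgp_iff a e (capF a e n) j).1 (List.of_mem_filter hj)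
        refine ⟨j, hjn, ?_, rfl⟩
        intro hhit
        exact hj2 ⟨hhit, RGSAux.capF_lt_of_hit a e hjn hhit⟩
      | succ d ih =>
        intro hd
        obtain ⟨Y, hY, hmem⟩ := ih (by omega)
        have hall : ∀ y ∈ Y, y < a (capF a e n + d) := by
          intro y hy
          obtain ⟨j, hjn, hnh, rfl⟩ := hmem y hy
          have h1 : e j < a (capF a e j) := lt_of_le_of_ne (hcap j hjn) hnh
          have h2 : capF a e j ≤ capF a e n := RGSAux.capF_mono a e (le_of_lt hjn)
          exact lt_of_lt_of_le h1 (ha _ _ (by omega) (by omega))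
        refine ⟨Y.dropLast, ?_, fun x hx => hmem x (List.dropLast_subset Y hx)⟩
        show (rgsRun a _ (capF a e n + d)).bind (rgsStep (a (capF a e n + d))) = _
        rw [hY, Option.bind_some, RGSAux.rgsStep_none _ _ hall]
    obtain ⟨Y, hY, _⟩ := key (n - capF a e n) (by omega)
    rw [show capF a e n + (n - capF a e n) = n by omega] at hY
    unfold IsRGGen
    rw [hY]
    rfl
  · intro hgen
    by_contra hcap
    unfold IsRGCap at hcap
    push_neg at hcap
    have hex : ∃ i, i < n ∧ a (capF a e i) < e i := by
      obtain ⟨i, h1, h2⟩ := hcap; exact ⟨i, h1, h2⟩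
    have hin := (Nat.find_spec hex).1
    have hvi := (Nat.find_spec hex).2
    set i := Nat.find hex with hidef
    have hmin : ∀ k, k < i → k < n → e k ≤ a (capF a e k) := by
      intro k hk hkn
      by_contra h
      exact Nat.find_min hex hk ⟨hkn, lt_of_not_ge h⟩
    set m := capF a e i with hm
    have hmi : m ≤ i := RGSAux.capF_le a e i
    have hrun := RGSAux.run_eq a e n ha m (by omega)
      (fun t ht => by
        obtain ⟨j, hj, h1, h2⟩ := RGSAux.exists_hit a e i t ht
        exact ⟨j, by omega, h1, h2⟩)
      (fun k hk hne hck => by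
        have hki : k < i := by
          by_contra h
          have := RGSAux.capF_mono a e (show i ≤ k by omega)
          omega
        exact lt_of_le_of_ne (hmin k hki hk) hne)
    have hpi : RGSAux.rgp a e m i = true :=
      (RGSAux.rgp_iff a e m i).2 (fun h => by omega)
    have hrs := RGSAux.range_split n i hin
    set A := (List.range i).filter (RGSAux.rgp a e m) with hAdef
    set B := ((List.range (n - (i+1))).map fun x => i+1+x).filter (RGSAux.rgp a e m) with hBdef
    have hIm : (List.range n).filter (RGSAux.rgp a e m) = A ++ i :: B := by
      rw [hrs, List.filter_append, List.filter_cons_of_pos hpi]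
    have hAe : ∀ y ∈ A.map e, y < a m := by
      intro y hy
      obtain ⟨k, hkA, rfl⟩ := List.mem_map.1 hy
      have hk1 := List.mem_range.1 (List.mem_of_mem_filter hkA)
      have hk2 := (RGSAux.rgp_iff a e m k).1 (List.of_mem_filter hkA)
      have hnh : ¬ e k = a (capF a e k) := by
        intro hh
        exact hk2 ⟨hh, hm ▸ RGSAux.capF_lt_of_hit a e hk1 hh⟩
      have hle : capF a e k ≤ m := hm ▸ RGSAux.capF_mono a e (le_of_lt hk1)
      have h1 : e k < a (capF a e k) := lt_of_le_of_ne (hmin k hk1 (by omega)) hnh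
      exact lt_of_lt_of_le h1 (ha _ _ hle (by omega))
    have hstep : rgsStep (a m) ((A ++ i :: B).map e) = none := by
      rw [List.map_append, List.map_cons,
        RGSAux.rgsStep_split (a m) _ _ _ hAe (le_of_lt hvi),
        if_neg (by intro h; rw [h] at hvi; exact lt_irrefl _ hvi)]
    have hnone : rgsRun a (List.ofFn fun i : Fin n => e i) (m+1) = none := by
      show (rgsRun a _ m).bind (rgsStep (a m)) = none
      rw [hrun, hIm, Option.bind_some, hstep]
    have hfin := RGSAux.rgsRun_none a _ (m+1) hnone n (by omega)
    unfold IsRGGen at hgen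
    rw [hfin] at hgen
    simp at hgen
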